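/- Let F : ℝ → ℝ be smooth and write F', F'', F''' for its derivatives. On Ω = {(t,x,v) ∈ ℝ³ : x ≠ 0} define the vector fields Ȳ₁(t,x,v) = (1, v, −F'(t)v + e^{−2F(t)}x^{−3} + x), Ȳ₂(t,x,v) = (1, v, −F'(t)v + e^{−2F(t)}x^{−3}), Ŷ₃(t,x,v) = (0, x, −(v + xF'(t))), and Ŷ₄(t,x,v) = (0, 2v + xF'(t), 2e^{−2F(t)}x^{−3} − 2x − F'(t)(v + xF'(t)) − xF''(t)). Then the following commutation relations hold on Ω: [Ȳ₁, Ȳ₂] = Ŷ₃; [Ȳ₁, Ŷ₃] = Ŷ₄; [Ȳ₁, Ŷ₄] = (4 + F'² + 2F'')Ŷ₃ − (F'F'' + F''')(Ȳ₁ − Ȳ₂); [Ȳ₂, Ŷ₃] = 2(Ȳ₁ − Ȳ₂) + Ŷ₄; [Ȳ₂, Ŷ₄] = (2 + F'² + 2F'')Ŷ₃ − (F'F'' + F''')(Ȳ₁ − Ȳ₂); [Ŷ₃, Ŷ₄] = −2Ŷ₄ − 2(4 + F'² + 2F'')(Ȳ₁ − Ȳ₂), where the coefficient functions are evaluated at t.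 -/

import Mathlib

/-- The Lie bracket of vector fields: `[A,B](p) = DB(p)·A(p) − DA(p)·B(p)`. -/
noncomputable def lieBr {E : Type*} [NormedAddCommGroup E] [NormedSpace ℝ E]
    (A B : E → E) : E → E :=
  fun p => fderiv ℝ B p (A p) - fderiv ℝ A p (B p)

/-- `Ȳ₁(t,x,v) = (1, v, −F'(t)v + e^{−2F(t)}x^{−3} + x)`. -/
noncomputable def mpY1 (F : ℝ → ℝ) : ℝ × ℝ × ℝ → ℝ × ℝ × ℝ := fun p =>
  (1, p.2.2, -(deriv F p.1) * p.2.2 + Real.exp (-(2 * F p.1)) * (p.2.1 ^ 3)⁻¹ + p.2.1)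

/-- `Ȳ₂(t,x,v) = (1, v, −F'(t)v + e^{−2F(t)}x^{−3})`. -/
noncomputable def mpY2 (F : ℝ → ℝ) : ℝ × ℝ × ℝ → ℝ × ℝ × ℝ := fun p =>
  (1, p.2.2, -(deriv F p.1) * p.2.2 + Real.exp (-(2 * F p.1)) * (p.2.1 ^ 3)⁻¹)

/-- `Ŷ₃(t,x,v) = (0, x, −(v + xF'(t)))`. -/
noncomputable def mpY3 (F : ℝ → ℝ) : ℝ × ℝ × ℝ → ℝ × ℝ × ℝ := fun p =>
  (0, p.2.1, -(p.2.2 + p.2.1 * deriv F p.1))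

/-- `Ŷ₄(t,x,v) = (0, 2v + xF'(t), 2e^{−2F(t)}x^{−3} − 2x − F'(t)(v + xF'(t)) − xF''(t))`. -/
noncomputable def mpY4 (F : ℝ → ℝ) : ℝ × ℝ × ℝ → ℝ × ℝ × ℝ := fun p =>
  (0, 2 * p.2.2 + p.2.1 * deriv F p.1,
    2 * Real.exp (-(2 * F p.1)) * (p.2.1 ^ 3)⁻¹ - 2 * p.2.1
      - deriv F p.1 * (p.2.2 + p.2.1 * deriv F p.1) - p.2.1 * deriv (deriv F) p.1)

set_option maxHeartbeats 1000000 in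
open ContinuousLinearMap in
/-- The commutation relations, on `Ω = {(t,x,v) : x ≠ 0}`, among the vector fields
`Ȳ₁, Ȳ₂, Ŷ₃, Ŷ₄` associated with the family of dissipative Milne–Pinney equations
`ẍ = −F'ẋ + ω²x + e^{−2F}x^{−3}`:
`[Ȳ₁,Ȳ₂] = Ŷ₃`, `[Ȳ₁,Ŷ₃] = Ŷ₄`,
`[Ȳ₁,Ŷ₄] = (4 + F'² + 2F'')Ŷ₃ − (F'F'' + F''')(Ȳ₁ − Ȳ₂)`,
`[Ȳ₂,Ŷ₃] = 2(Ȳ₁ − Ȳ₂) + Ŷ₄`,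
`[Ȳ₂,Ŷ₄] = (2 + F'² + 2F'')Ŷ₃ − (F'F'' + F''')(Ȳ₁ − Ȳ₂)`,
`[Ŷ₃,Ŷ₄] = −2Ŷ₄ − 2(4 + F'² + 2F'')(Ȳ₁ − Ȳ₂)`. -/
theorem mp_commutation_relations (F : ℝ → ℝ) (hF : ContDiff ℝ (⊤ : ℕ∞) F) :
    ∀ p : ℝ × ℝ × ℝ, p.2.1 ≠ 0 →
      lieBr (mpY1 F) (mpY2 F) p = mpY3 F p
      ∧ lieBr (mpY1 F) (mpY3 F) p = mpY4 F p
      ∧ lieBr (mpY1 F) (mpY4 F) p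
          = (4 + (deriv F p.1) ^ 2 + 2 * deriv (deriv F) p.1) • mpY3 F p
            - (deriv F p.1 * deriv (deriv F) p.1 + deriv (deriv (deriv F)) p.1)
              • (mpY1 F p - mpY2 F p)
      ∧ lieBr (mpY2 F) (mpY3 F) p = (2 : ℝ) • (mpY1 F p - mpY2 F p) + mpY4 F p
      ∧ lieBr (mpY2 F) (mpY4 F) p
          = (2 + (deriv F p.1) ^ 2 + 2 * deriv (deriv F) p.1) • mpY3 F p
            - (deriv F p.1 * deriv (deriv F) p.1 + deriv (deriv (deriv F)) p.1)
              • (mpY1 F p - mpY2 F p)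
      ∧ lieBr (mpY3 F) (mpY4 F) p
          = (-2 : ℝ) • mpY4 F p
            - (2 * (4 + (deriv F p.1) ^ 2 + 2 * deriv (deriv F) p.1))
              • (mpY1 F p - mpY2 F p) := by
  intro p hx
  obtain ⟨t, x, v⟩ := p
  simp only at hx
  have hC1 : ContDiff ℝ (⊤ : ℕ∞) (deriv F) := (contDiff_infty_iff_deriv.mp hF).2
  have hC2 : ContDiff ℝ (⊤ : ℕ∞) (deriv (deriv F)) := (contDiff_infty_iff_deriv.mp hC1).2
  have hder1 : HasDerivAt F (deriv F t) t :=
    ((contDiff_infty_iff_deriv.mp hF).1 t).hasDerivAt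
  have hder2 : HasDerivAt (deriv F) (deriv (deriv F) t) t :=
    ((contDiff_infty_iff_deriv.mp hC1).1 t).hasDerivAt
  have hder3 : HasDerivAt (deriv (deriv F)) (deriv (deriv (deriv F)) t) t :=
    ((contDiff_infty_iff_deriv.mp hC2).1 t).hasDerivAt
  have hT : HasFDerivAt (fun q : ℝ × ℝ × ℝ => q.1) (fst ℝ ℝ (ℝ × ℝ)) (t, x, v) :=
    hasFDerivAt_fst
  have hX : HasFDerivAt (fun q : ℝ × ℝ × ℝ => q.2.1)
      ((fst ℝ ℝ ℝ).comp (snd ℝ ℝ (ℝ × ℝ))) (t, x, v) :=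
    hasFDerivAt_fst.comp _ hasFDerivAt_snd
  have hV : HasFDerivAt (fun q : ℝ × ℝ × ℝ => q.2.2)
      ((snd ℝ ℝ ℝ).comp (snd ℝ ℝ (ℝ × ℝ))) (t, x, v) :=
    hasFDerivAt_snd.comp _ hasFDerivAt_snd
  have hd1 : HasFDerivAt (fun q : ℝ × ℝ × ℝ => deriv F q.1)
      (deriv (deriv F) t • fst ℝ ℝ (ℝ × ℝ)) (t, x, v) :=
    (hder2.comp_hasFDerivAt _ hT :)
  have hd2 : HasFDerivAt (fun q : ℝ × ℝ × ℝ => deriv (deriv F) q.1)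
      (deriv (deriv (deriv F)) t • fst ℝ ℝ (ℝ × ℝ)) (t, x, v) :=
    (hder3.comp_hasFDerivAt _ hT :)
  have hEs : HasDerivAt (fun s => Real.exp (-(2 * F s)))
      (Real.exp (-(2 * F t)) * (-(2 * deriv F t))) t :=
    (((hder1.const_mul 2).neg).exp)
  have hE : HasFDerivAt (fun q : ℝ × ℝ × ℝ => Real.exp (-(2 * F q.1)))
      ((Real.exp (-(2 * F t)) * (-(2 * deriv F t))) • fst ℝ ℝ (ℝ × ℝ)) (t, x, v) :=
    (hEs.comp_hasFDerivAt _ hT :)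
  have hXis : HasDerivAt (fun s : ℝ => (s ^ 3)⁻¹)
      (-(3 * x ^ 2) / (x ^ 3) ^ 2) x :=
    (hasDerivAt_pow 3 x).inv (pow_ne_zero 3 hx) |>.congr_deriv (by push_cast; ring)
  have hXi : HasFDerivAt (fun q : ℝ × ℝ × ℝ => (q.2.1 ^ 3)⁻¹)
      ((-(3 * x ^ 2) / (x ^ 3) ^ 2) • ((fst ℝ ℝ ℝ).comp (snd ℝ ℝ (ℝ × ℝ)))) (t, x, v) :=
    (hXis.comp_hasFDerivAt (h₂ := fun s : ℝ => (s ^ 3)⁻¹) _ hX :)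
  have hY1 : HasFDerivAt (mpY1 F) _ (t, x, v) :=
    HasFDerivAt.prodMk (hasFDerivAt_const (1 : ℝ) _) (hV.prodMk (((hd1.neg.mul hV).add (hE.mul hXi)).add hX))
  have hY2 : HasFDerivAt (mpY2 F) _ (t, x, v) :=
    HasFDerivAt.prodMk (hasFDerivAt_const (1 : ℝ) _) (hV.prodMk ((hd1.neg.mul hV).add (hE.mul hXi)))
  have hY3 : HasFDerivAt (mpY3 F) _ (t, x, v) :=
    HasFDerivAt.prodMk (hasFDerivAt_const (0 : ℝ) _) (hX.prodMk ((hV.add (hX.mul hd1)).neg))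
  have hY4 : HasFDerivAt (mpY4 F) _ (t, x, v) :=
    HasFDerivAt.prodMk (hasFDerivAt_const (0 : ℝ) _) (((hV.const_mul 2).add (hX.mul hd1)).prodMk
      ((((((hE.const_mul 2).mul hXi).sub (hX.const_mul 2)).sub
        (hd1.mul (hV.add (hX.mul hd1)))).sub (hX.mul hd2))))
  have A1 : ∀ w : ℝ × ℝ × ℝ, fderiv ℝ (mpY1 F) (t, x, v) w =
      (0, w.2.2,
        (Real.exp (-(2 * F t)) * (-(2 * deriv F t)) * (x ^ 3)⁻¹ - deriv (deriv F) t * v) * w.1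
          + (Real.exp (-(2 * F t)) * (-(3 * x ^ 2) / (x ^ 3) ^ 2) + 1) * w.2.1
          - deriv F t * w.2.2) := by
    intro w
    rw [hY1.fderiv]
    simp only [prod_apply, add_apply, sub_apply, neg_apply, smul_apply, coe_comp',
      Function.comp_apply, coe_fst', coe_snd', zero_apply, smul_eq_mul, Prod.mk.injEq, Pi.neg_apply, Pi.add_apply, Pi.mul_apply]
    refine ⟨trivial, trivial, by ring⟩
  have A2 : ∀ w : ℝ × ℝ × ℝ, fderiv ℝ (mpY2 F) (t, x, v) w =
      (0, w.2.2,
        (Real.exp (-(2 * F t)) * (-(2 * deriv F t)) * (x ^ 3)⁻¹ - deriv (deriv F) t * v) * w.1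
          + (Real.exp (-(2 * F t)) * (-(3 * x ^ 2) / (x ^ 3) ^ 2)) * w.2.1
          - deriv F t * w.2.2) := by
    intro w
    rw [hY2.fderiv]
    simp only [prod_apply, add_apply, sub_apply, neg_apply, smul_apply, coe_comp',
      Function.comp_apply, coe_fst', coe_snd', zero_apply, smul_eq_mul, Prod.mk.injEq, Pi.neg_apply, Pi.add_apply, Pi.mul_apply]
    refine ⟨trivial, trivial, by ring⟩
  have A3 : ∀ w : ℝ × ℝ × ℝ, fderiv ℝ (mpY3 F) (t, x, v) w =
      (0, w.2.1, -(w.2.2 + w.2.1 * deriv F t + x * deriv (deriv F) t * w.1)) := by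
    intro w
    rw [hY3.fderiv]
    simp only [prod_apply, add_apply, sub_apply, neg_apply, smul_apply, coe_comp',
      Function.comp_apply, coe_fst', coe_snd', zero_apply, smul_eq_mul, Prod.mk.injEq, Pi.neg_apply, Pi.add_apply, Pi.mul_apply]
    refine ⟨trivial, trivial, by ring⟩
  have A4 : ∀ w : ℝ × ℝ × ℝ, fderiv ℝ (mpY4 F) (t, x, v) w =
      (0, 2 * w.2.2 + w.2.1 * deriv F t + x * deriv (deriv F) t * w.1,
        (2 * Real.exp (-(2 * F t)) * (-(2 * deriv F t)) * (x ^ 3)⁻¹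
            - deriv (deriv F) t * v - 2 * x * deriv F t * deriv (deriv F) t
            - x * deriv (deriv (deriv F)) t) * w.1
          + (2 * Real.exp (-(2 * F t)) * (-(3 * x ^ 2) / (x ^ 3) ^ 2) - 2
              - deriv F t * deriv F t - deriv (deriv F) t) * w.2.1
          - deriv F t * w.2.2) := by
    intro w
    rw [hY4.fderiv]
    simp only [prod_apply, add_apply, sub_apply, neg_apply, smul_apply, coe_comp',
      Function.comp_apply, coe_fst', coe_snd', zero_apply, smul_eq_mul, Prod.mk.injEq, Pi.neg_apply, Pi.add_apply, Pi.mul_apply]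
    refine ⟨trivial, by ring, by ring⟩
  refine ⟨?_, ?_, ?_, ?_, ?_, ?_⟩ <;>
    simp only [lieBr, mpY1, mpY2, mpY3, mpY4, A1, A2, A3, A4, Prod.smul_mk, Prod.mk_add_mk,
      Prod.mk_sub_mk, smul_eq_mul, Prod.mk.injEq] <;>
    refine ⟨by ring, by ring, by field_simp; ring⟩
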